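/- arXiv:2207.08459 — 2 statements merged into one kernel-verified Lean document; each statement's English description precedes it below -/
import Mathlib

section
/- The countably infinite complete graph K^{ℵ₀} is not strongly immersed in the Farey graph. -/
open SimpleGraph

/-- Two walks (with arbitrary endpoints) are edge-disjoint. -/
def EdgeDisjW {V : Type*} {G : SimpleGraph V} {a b c d : V}
    (p : G.Walk a b) (q : G.Walk c d) : Prop :=
  ∀ e, e ∈ p.edges → e ∉ q.edges

/-- A graph is infinitely edge-connected: it has at least two vertices and
between any two distinct vertices there are infinitely many pairwise
edge-disjoint paths. -/
def InfEdgeConn {V : Type*} (G : SimpleGraph V) : Prop :=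
  (∃ u v : V, u ≠ v) ∧
    ∀ u v : V, u ≠ v →
      ∃ P : ℕ → G.Walk u v,
        (∀ n, (P n).IsPath) ∧ ∀ m n, m ≠ n → EdgeDisjW (P m) (P n)

/-- Infinite edge-connectivity of the subgraph spanned by a vertex set `S`
(used for graphs of the form "union of a family of paths", whose abstract
vertex set is `S`). -/
def InfEdgeConnOn {V : Type*} (G : SimpleGraph V) (S : Set V) : Prop :=
  (∃ u ∈ S, ∃ v ∈ S, u ≠ v) ∧
    ∀ u ∈ S, ∀ v ∈ S, u ≠ v →
      ∃ P : ℕ → G.Walk u v,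
        (∀ n, (P n).IsPath) ∧ ∀ m n, m ≠ n → EdgeDisjW (P m) (P n)

/-- `α` together with the family of paths `P` (one for each edge of `H`)
is a strong immersion of `H` in `G`. -/
def IsStrongImmersion {VH VG : Type*} (H : SimpleGraph VH) (G : SimpleGraph VG)
    (α : VH → VG) (P : ∀ ⦃u v : VH⦄, H.Adj u v → G.Walk (α u) (α v)) : Prop :=
  Function.Injective α ∧
  (∀ ⦃u v : VH⦄ (h : H.Adj u v), (P h).IsPath) ∧
  (∀ ⦃u v u' v' : VH⦄ (h : H.Adj u v) (h' : H.Adj u' v'),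
      s(u, v) ≠ s(u', v') → EdgeDisjW (P h) (P h')) ∧
  (∀ ⦃u v : VH⦄ (h : H.Adj u v), ∀ w ∈ (P h).support,
      (∃ z, α z = w) → w = α u ∨ w = α v)

/-- `H` is strongly immersed in `G`. -/
def StronglyImmersed {VH VG : Type*} (H : SimpleGraph VH) (G : SimpleGraph VG) : Prop :=
  ∃ α P, IsStrongImmersion H G α P

/-- `β` together with the family of paths `P` witnesses that `G` contains
a subdivision of `H`: the paths are internally disjoint and have no internal
vertex among the branch vertices. -/
def IsSubdivision {VH VG : Type*} (H : SimpleGraph VH) (G : SimpleGraph VG)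
    (β : VH → VG) (P : ∀ ⦃u v : VH⦄, H.Adj u v → G.Walk (β u) (β v)) : Prop :=
  Function.Injective β ∧
  (∀ ⦃u v : VH⦄ (h : H.Adj u v), (P h).IsPath) ∧
  (∀ ⦃u v u' v' : VH⦄ (h : H.Adj u v) (h' : H.Adj u' v'),
      s(u, v) ≠ s(u', v') → ∀ w, w ∈ (P h).support → w ∈ (P h').support →
        (w = β u ∨ w = β v) ∧ (w = β u' ∨ w = β v')) ∧
  (∀ ⦃u v : VH⦄ (h : H.Adj u v), ∀ w ∈ (P h).support,
      (∃ z, β z = w) → w = β u ∨ w = β v)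

/-- `H` is a topological minor of `G`. -/
def TopMinor {VH VG : Type*} (H : SimpleGraph VH) (G : SimpleGraph VG) : Prop :=
  ∃ β P, IsSubdivision H G β P

/-- The dyadic rationals of the unit interval: the vertices of the halved
Farey graph. -/
def DyadicSet : Set ℚ := {q | ∃ n k : ℕ, k ≤ 2 ^ n ∧ q = (k : ℚ) / 2 ^ n}

/-- The halved Farey graph: two dyadic rationals of `[0,1]` are adjacent iff
they are of the form `k/2^n` and `(k+1)/2^n`. -/
def halvedFarey : SimpleGraph DyadicSet where
  Adj a b := a ≠ b ∧ ∃ n k : ℕ, k + 1 ≤ 2 ^ n ∧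
    ((a.1 = (k : ℚ) / 2 ^ n ∧ b.1 = ((k : ℚ) + 1) / 2 ^ n) ∨
     (b.1 = (k : ℚ) / 2 ^ n ∧ a.1 = ((k : ℚ) + 1) / 2 ^ n))
  symm := by
    constructor
    rintro a b ⟨hne, n, k, hk, h⟩
    exact ⟨hne.symm, n, k, hk, h.symm⟩
  loopless := by constructor; rintro a ⟨hne, -⟩; exact hne rfl

/-- Adjacency in the Farey graph on `ℚ ∪ {∞}` (`none` is `∞ = ±1/0`). -/
def fareyAdj : Option ℚ → Option ℚ → Prop
  | some q, some r =>
      q.num * (r.den : ℤ) - r.num * (q.den : ℤ) = 1 ∨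
      q.num * (r.den : ℤ) - r.num * (q.den : ℤ) = -1
  | some q, none => q.den = 1
  | none, some r => r.den = 1
  | none, none => False

/-- The Farey graph. -/
def fareyGraph : SimpleGraph (Option ℚ) where
  Adj := fareyAdj
  symm := by
    constructor
    rintro (_ | q) (_ | r) h <;> simp only [fareyAdj] at * <;> omega
  loopless := by
    constructor
    rintro (_ | q) h <;> simp only [fareyAdj] at h <;> omega
/-- `u` occurs strictly before `v` on the list `l`. -/
def Before {V : Type*} (l : List V) (u v : V) : Prop := List.Sublist [u, v] l

/-- `l` is the (consecutive) portion of the list `R` starting at `u` and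
ending at `v`. -/
def IsPortion {V : Type*} (R : List V) (u v : V) (l : List V) : Prop :=
  (∃ pre post, R = pre ++ l ++ post) ∧ l.head? = some u ∧ l.getLast? = some v

/-- The union of a family of walks, as a graph on the ambient vertex set
(its abstract vertex set is `walkSupp P`). -/
def walkUnion {V : Type*} {G : SimpleGraph V} {x y : V}
    (P : ℕ → G.Walk x y) : SimpleGraph V where
  Adj u v := ∃ n, s(u, v) ∈ (P n).edges
  symm := by
    constructor
    rintro u v ⟨n, h⟩
    exact ⟨n, by rwa [Sym2.eq_swap]⟩
  loopless := by
    constructor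
    rintro v ⟨n, h⟩
    exact G.ne_of_adj ((P n).edges_subset_edgeSet h) rfl

/-- The vertices appearing on some walk of the family. -/
def walkSupp {V : Type*} {G : SimpleGraph V} {x y : V}
    (P : ℕ → G.Walk x y) : Set V := {v | ∃ n, v ∈ (P n).support}

/-- An `x`–`y` grain line in `G`. -/
structure GrainLine {V : Type*} (G : SimpleGraph V) (x y : V) where
  ne_xy : x ≠ y
  /-- The limit set `L`. -/
  L : Set V
  /-- The linear order `≤_L` on `L`. -/
  le : V → V → Prop
  /-- The pairwise edge-disjoint `x`–`y` paths. -/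
  P : ℕ → G.Walk x y
  isPath : ∀ n, (P n).IsPath
  edgeDisj : ∀ m n, m ≠ n → EdgeDisjW (P m) (P n)
  le_refl : ∀ v ∈ L, le v v
  le_trans : ∀ u ∈ L, ∀ v ∈ L, ∀ w ∈ L, le u v → le v w → le u w
  le_antisymm : ∀ u ∈ L, ∀ v ∈ L, le u v → le v u → u = v
  le_total : ∀ u ∈ L, ∀ v ∈ L, le u v ∨ le v u
  x_mem : x ∈ L
  y_mem : y ∈ L
  x_min : ∀ v ∈ L, le x v
  y_max : ∀ v ∈ L, le v y
  /-- (GL1): `L` is the set of vertices lying on a final segment of the paths. -/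
  gl1 : ∀ v : V, v ∈ L ↔ ∃ N : ℕ, ∀ n : ℕ, v ∈ (P n).support ↔ N ≤ n
  /-- (GL2): a vertex of some path not in `L` lies on no other path. -/
  gl2 : ∀ n : ℕ, ∀ v ∈ (P n).support, v ∉ L → ∀ m : ℕ, m ≠ n → v ∉ (P m).support
  /-- (GL3): for `n ≥ 1`, the path `P n` traverses the vertices of `L_{<n}`
  in the order given by `≤_L`. -/
  gl3 : ∀ n : ℕ, 1 ≤ n → ∀ u v : V, u ∈ L → v ∈ L →
      (∃ m < n, u ∈ (P m).support) → (∃ m < n, v ∈ (P m).support) →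
      u ≠ v → (le u v ↔ Before (P n).support u v)

namespace GrainLine

variable {V : Type*} {G : SimpleGraph V} {x y : V}

/-- The graph `⋃𝒫` defined by the grain line. -/
def union (gl : GrainLine G x y) : SimpleGraph V := walkUnion gl.P

/-- The vertex set of `⋃𝒫`. -/
def supp (gl : GrainLine G x y) : Set V := walkSupp gl.P

/-- The set `L_{<n}` of vertices of `L` of depth `< n`. -/
def Llt (gl : GrainLine G x y) (n : ℕ) : Set V :=
  {v | v ∈ gl.L ∧ ∃ m < n, v ∈ (gl.P m).support}

/-- The `𝒫`-depth of a vertex. -/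
noncomputable def vDepth (gl : GrainLine G x y) (v : V) : ℕ :=
  sInf {n | v ∈ (gl.P n).support}

/-- The `𝒫`-depth of an edge. -/
noncomputable def eDepth (gl : GrainLine G x y) (e : Sym2 V) : ℕ :=
  sInf {n | e ∈ (gl.P n).edges}

/-- `u` and `v` are the ends of a `𝒫`-segment of depth `d`: both lie in
`L_{<d}` and `v` is the successor of `u` in `(L_{<d}, ≤_L)`. -/
def IsSegEnds (gl : GrainLine G x y) (d : ℕ) (u v : V) : Prop :=
  u ∈ gl.Llt d ∧ v ∈ gl.Llt d ∧ u ≠ v ∧ gl.le u v ∧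
    ∀ z ∈ gl.Llt d, gl.le u z → gl.le z v → z = u ∨ z = v

/-- The grain line is well-structured: every vertex of a `𝒫`-segment
`u P_d v` lying in `L` belongs to the interval `[u,v]` of `(L, ≤_L)`. -/
def WellStructured (gl : GrainLine G x y) : Prop :=
  ∀ d u v, gl.IsSegEnds d u v →
    ∀ w ∈ gl.L, (w = u ∨ w = v ∨ List.Sublist [u, w, v] (gl.P d).support) →
      gl.le u w ∧ gl.le w v

/-- The grain line is free: the graph `⋃𝒫` it defines is infinitely
edge-connected. -/
def Free (gl : GrainLine G x y) : Prop := InfEdgeConnOn gl.union gl.supp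

/-- The grain line is wildly presented. -/
def WildlyPresented (gl : GrainLine G x y) : Prop :=
  ∀ n : ℕ, 1 ≤ n → ∀ u v : V, u ∈ gl.Llt n → v ∈ gl.Llt n → u ≠ v → gl.le u v →
    ∃ w ∈ gl.L, w ≠ u ∧ w ≠ v ∧ gl.le u w ∧ gl.le w v ∧
      List.Sublist [u, w, v] (gl.P n).support

end GrainLine

/-- `G` is a generalised halved Farey graph: it is defined by a grain line
satisfying (GL2') and (GL3'). -/
def IsGenHalvedFarey {V : Type*} (G : SimpleGraph V) : Prop :=
  ∃ (x y : V) (gl : GrainLine G x y),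
    (∀ v : V, v ∈ gl.L) ∧
    (∀ u v : V, gl.le u v ↔ (u = v ∨ ∃ n, Before (gl.P n).support u v)) ∧
    (∀ u v : V, G.Adj u v ↔ ∃ n, s(u, v) ∈ (gl.P n).edges)
/-- `{A, B}` is a compound-separation of `G`. -/
def IsCompoundSep {V : Type*} (G : SimpleGraph V) (A B : Set V) : Prop :=
  A ∪ B = Set.univ ∧ (A \ B).Nonempty ∧ (B \ A).Nonempty ∧ (A ∩ B).Finite ∧
    {p : V × V | G.Adj p.1 p.2 ∧ p.1 ∈ A \ B ∧ p.2 ∈ B \ A}.Finite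

/-- The separation `{A, B}` separates the vertices `u` and `v`. -/
def SepPair {V : Type*} (A B : Set V) (u v : V) : Prop :=
  (u ∈ A \ B ∧ v ∈ B \ A) ∨ (u ∈ B \ A ∧ v ∈ A \ B)

/-- The compound-separation `{A, B}` separates `u` and `v` minimally. -/
def MinSeps {V : Type*} (G : SimpleGraph V) (A B : Set V) (u v : V) : Prop :=
  SepPair A B u v ∧
    ∀ C D : Set V, IsCompoundSep G C D → C ∩ D ⊂ A ∩ B → ¬ SepPair C D u v

/-- `{A, B}` is a unitary compound-separation of `G` with separator `w`. -/
def IsUnitaryCSep {V : Type*} (G : SimpleGraph V) (A B : Set V) (w : V) : Prop :=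
  IsCompoundSep G A B ∧ A ∩ B = {w}

/-- `w` is a compound-cutvertex of `G`. -/
def IsCompoundCutvertex {V : Type*} (G : SimpleGraph V) (w : V) : Prop :=
  ∃ A B, IsUnitaryCSep G A B w

/-- `G` is `k`-compound-connected: no compound-separation of order `< k`
separates any two vertices. -/
def kCompConn {V : Type*} (G : SimpleGraph V) (k : ℕ) : Prop :=
  ∀ A B : Set V, IsCompoundSep G A B → (A ∩ B).ncard < k →
    ∀ u v : V, ¬ SepPair A B u v

/-- `u` and `v` cannot be separated by deleting finitely many edges. -/
def FinEdgeConn {V : Type*} (G : SimpleGraph V) (u v : V) : Prop :=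
  ∀ F : Set (Sym2 V), F.Finite → (G.deleteEdges F).Reachable u v

/-- `G` is a Π-graph: it is infinitely edge-connected but has no two vertices
linked by infinitely many pairwise internally disjoint paths. -/
def PiGraph {V : Type*} (G : SimpleGraph V) : Prop :=
  InfEdgeConn G ∧
    ∀ u v : V, u ≠ v →
      ¬ ∃ P : ℕ → G.Walk u v, (∀ n, (P n).IsPath) ∧
          ∀ m n, m ≠ n → ∀ w ∈ (P m).support, w ∈ (P n).support → w = u ∨ w = v

/-- `H` is a `k`-bounded minor of `G`: there are disjoint nonempty connected
branch sets of size `< k`. -/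
def IsBddMinor {VH VG : Type*} (H : SimpleGraph VH) (G : SimpleGraph VG) (k : ℕ) : Prop :=
  ∃ B : VH → Set VG,
    (∀ h, (B h).Nonempty) ∧
    (∀ h, (B h).Finite ∧ (B h).ncard < k) ∧
    (∀ h h', h ≠ h' → Disjoint (B h) (B h')) ∧
    (∀ h, (G.induce (B h)).Connected) ∧
    (∀ h h', H.Adj h h' → ∃ a ∈ B h, ∃ b ∈ B h', G.Adj a b)

/-- The order on oriented separations: `(A,B) ≤ (C,D)` iff `A ⊆ C` and `D ⊆ B`. -/
def osLE {V : Type*} (s t : Set V × Set V) : Prop := s.1 ⊆ t.1 ∧ t.2 ⊆ s.2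

/-- The reverse orientation of an oriented separation. -/
def swapSep {V : Type*} (s : Set V × Set V) : Set V × Set V := (s.2, s.1)

/-- Two (unordered) separations, given by representative orientations, are
nested: they have comparable orientations. -/
def NestedSep {V : Type*} (s t : Set V × Set V) : Prop :=
  osLE s t ∨ osLE t s ∨ osLE s (swapSep t) ∨ osLE (swapSep s) t

/-- `σ` is an orientation of the set `N` of separations which is a star. -/
def IsStarOrientation {V : Type*} (N σ : Set (Set V × Set V)) : Prop :=
  (∀ s ∈ N, s ∈ σ ∨ swapSep s ∈ σ) ∧
  (∀ s ∈ N, ¬ (s ∈ σ ∧ swapSep s ∈ σ)) ∧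
  (∀ t ∈ σ, t ∈ N ∨ swapSep t ∈ N) ∧
  (∀ s ∈ σ, ∀ t ∈ σ, s ≠ t → osLE s (swapSep t))

/-- The set `N` of unitary compound-separations is faithful to the
compound-cutvertex `w` in `G`. -/
def FaithfulToVert {V : Type*} (G : SimpleGraph V) (N : Set (Set V × Set V)) (w : V) : Prop :=
  (∃ σ, IsStarOrientation {s ∈ N | s.1 ∩ s.2 = {w}} σ) ∧
  ∀ u v : V, (∃ A B, IsUnitaryCSep G A B w ∧ SepPair A B u v) →
    ∃ s ∈ N, s.1 ∩ s.2 = {w} ∧ SepPair s.1 s.2 u v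

/-- The set `N` of unitary compound-separations is faithful to `G`. -/
def FaithfulSet {V : Type*} (G : SimpleGraph V) (N : Set (Set V × Set V)) : Prop :=
  ∀ w : V, IsCompoundCutvertex G w → FaithfulToVert G N w

/-- A set of graphs is typical for the class of infinitely edge-connected
graphs with regard to the topological minor relation. -/
def TypicalTopMinor (𝓗 : Set (Σ V : Type, SimpleGraph V)) : Prop :=
  ∀ (W : Type) (G : SimpleGraph W), InfEdgeConn G → ∃ H ∈ 𝓗, TopMinor H.2 G

section KaF

open SimpleGraph

private lemma farey_den_one_le (a : ℚ) : (1:ℤ) ≤ (a.den : ℤ) := by exact_mod_cast a.pos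

/-- Between an edge of the Farey graph: denominators add up. -/
private lemma farey_adj_between {a b w : ℚ} (h : fareyGraph.Adj (some a) (some b))
    (h1 : a < w) (h2 : w < b) : a.den + b.den ≤ w.den := by
  have hd : a.num * (b.den : ℤ) - b.num * (a.den : ℤ) = 1 ∨
      a.num * (b.den : ℤ) - b.num * (a.den : ℤ) = -1 := h
  have l1 : a.num * (w.den:ℤ) < w.num * (a.den:ℤ) := (Rat.lt_iff _ _).mp h1
  have l2 : w.num * (b.den:ℤ) < b.num * (w.den:ℤ) := (Rat.lt_iff _ _).mp h2
  have pa := farey_den_one_le a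
  have pb := farey_den_one_le b
  have pw := farey_den_one_le w
  have A1 : (1:ℤ) ≤ w.num * a.den - a.num * w.den := by omega
  have A2 : (1:ℤ) ≤ b.num * w.den - w.num * b.den := by omega
  have B1 : (b.den:ℤ) * 1 ≤ (b.den:ℤ) * (w.num * a.den - a.num * w.den) :=
    mul_le_mul_of_nonneg_left A1 (by omega)
  have B2 : (a.den:ℤ) * 1 ≤ (a.den:ℤ) * (b.num * w.den - w.num * b.den) :=
    mul_le_mul_of_nonneg_left A2 (by omega)
  have key : (b.den:ℤ) * (w.num * a.den - a.num * w.den)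
      + (a.den:ℤ) * (b.num * w.den - w.num * b.den)
      = (w.den:ℤ) * (-(a.num * b.den - b.num * a.den)) := by ring
  have : (a.den:ℤ) + b.den ≤ w.den := by
    rcases hd with he | he <;> rw [he] at key <;> nlinarith [key, B1, B2]
  exact_mod_cast this

/-- Adjacent vertices of the Farey graph are at distance at most 1. -/
private lemma farey_adj_close {a b : ℚ} (h : fareyGraph.Adj (some a) (some b)) :
    |a - b| ≤ 1 := by
  have hd : a.num * (b.den : ℤ) - b.num * (a.den : ℤ) = 1 ∨
      a.num * (b.den : ℤ) - b.num * (a.den : ℤ) = -1 := h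
  have ha : (a.den : ℚ) ≠ 0 := by positivity
  have hb : (b.den : ℚ) ≠ 0 := by positivity
  have key : (a - b) * ((a.den : ℚ) * (b.den : ℚ))
      = ((a.num * (b.den:ℤ) - b.num * (a.den:ℤ) : ℤ) : ℚ) := by
    push_cast
    nth_rewrite 1 [← Rat.num_div_den a, ← Rat.num_div_den b]
    field_simp
  have h1 : (1:ℚ) ≤ (a.den : ℚ) * (b.den : ℚ) := by
    have h2 : (1:ℚ) ≤ (a.den:ℚ) := by exact_mod_cast a.pos
    have h3 : (1:ℚ) ≤ (b.den:ℚ) := by exact_mod_cast b.pos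
    nlinarith
  have habs : |a - b| * ((a.den : ℚ) * (b.den : ℚ)) = 1 := by
    rw [← abs_of_pos (show (0:ℚ) < (a.den:ℚ)*(b.den:ℚ) by nlinarith), ← abs_mul, key]
    rcases hd with he | he <;> rw [he] <;> norm_num
  nlinarith [abs_nonneg (a - b)]

private lemma farey_adj_inf {a : ℚ} (h : fareyGraph.Adj (some a) none) : a.den = 1 := h

/-- A box of rationals with bounded absolute value and denominator is finite. -/
private lemma ratBox_finite (M : ℚ) (D : ℕ) : {q : ℚ | |q| ≤ M ∧ q.den ≤ D}.Finite := by
  have hsub : {q : ℚ | |q| ≤ M ∧ q.den ≤ D} ⊆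
      (fun p : ℤ × ℕ => (p.1 : ℚ) / (p.2 : ℚ)) ''
        (Set.Icc (-⌈M * D⌉) ⌈M * D⌉ ×ˢ Set.Icc 1 D) := by
    rintro q ⟨hq, hd⟩
    refine ⟨(q.num, q.den), ⟨?_, q.pos, hd⟩, by simpa using q.num_div_den⟩
    have hM : 0 ≤ M := le_trans (abs_nonneg q) hq
    have hnum : |(q.num : ℚ)| ≤ M * D := by
      have hdpos : (0:ℚ) < (q.den:ℚ) := by exact_mod_cast q.pos
      have h0 : (q.num : ℚ) = q * q.den := by
        have h1 : (q.num:ℚ)/(q.den:ℚ) = q := Rat.num_div_den q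
        rw [div_eq_iff (ne_of_gt hdpos)] at h1
        exact h1
      rw [h0, abs_mul, abs_of_pos hdpos]
      apply mul_le_mul hq (by exact_mod_cast hd) (by positivity) hM
    have hceil : |(q.num : ℚ)| ≤ (⌈M * D⌉ : ℚ) := le_trans hnum (Int.le_ceil _)
    have : |q.num| ≤ ⌈M * D⌉ := by exact_mod_cast hceil
    exact abs_le.mp this
  exact Set.Finite.subset (((Set.finite_Icc _ _).prod (Set.finite_Icc _ _)).image _) hsub

/-- Walking from a vertex satisfying `Pr` to one that does not, some edge crosses. -/
private lemma walk_cross {V : Type*} {G : SimpleGraph V} {Pr : V → Prop} :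
    ∀ {x y : V} (W : G.Walk x y), Pr x → ¬ Pr y →
      ∃ c d, s(c, d) ∈ W.edges ∧ Pr c ∧ ¬ Pr d := by
  intro x y W
  induction W with
  | nil => intro hx hy; exact absurd hx hy
  | @cons a b c h q ih =>
    intro hx hy
    by_cases hb : Pr b
    · obtain ⟨c', d', h1, h2, h3⟩ := ih hb hy
      exact ⟨c', d', by simp [Walk.edges_cons, h1], h2, h3⟩
    · exact ⟨a, b, by simp [Walk.edges_cons], hx, hb⟩

/-- The rational box associated with the pair `w1 w2`. -/
private def fBox (w1 w2 : ℚ) : Set ℚ :=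
  {q : ℚ | |q| ≤ |w1| + |w2| + 1 ∧ q.den ≤ max w1.den w2.den}

/-- The finite set of possible crossing edges. -/
private def fKF (w1 w2 : ℚ) : Set (Option ℚ × Option ℚ) :=
  (some '' fBox w1 w2) ×ˢ insert none (some '' fBox w1 w2)

private lemma fKF_finite (w1 w2 : ℚ) : (fKF w1 w2).Finite :=
  ((ratBox_finite _ _).image _).prod (((ratBox_finite _ _).image _).insert _)

end KaF
section KaF2

open SimpleGraph

private lemma farey_cross_pair {α : ℕ → Option ℚ}
    {P : ∀ ⦃u v : ℕ⦄, (⊤ : SimpleGraph ℕ).Adj u v → fareyGraph.Walk (α u) (α v)}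
    (himm : IsStrongImmersion (⊤ : SimpleGraph ℕ) fareyGraph α P)
    {u v : ℕ} (h : (⊤ : SimpleGraph ℕ).Adj u v) {w1 w2 : ℚ} (hw : w1 < w2)
    (hw1 : some w1 ∈ Set.range α) (hw2 : some w2 ∈ Set.range α)
    (hu : ∃ q, α u = some q ∧ w1 < q ∧ q < w2)
    (hv : ¬ ∃ q, α v = some q ∧ w1 < q ∧ q < w2)
    (huw1 : α u ≠ some w1) (huw2 : α u ≠ some w2)
    (hvw1 : α v ≠ some w1) (hvw2 : α v ≠ some w2) :
    ∃ c d, s(c, d) ∈ (P h).edges ∧ (c, d) ∈ fKF w1 w2 := by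
  obtain ⟨-, -, -, hbranch⟩ := himm
  obtain ⟨c, d, hedge, hc, hd⟩ :=
    walk_cross (Pr := fun o => ∃ q, o = some q ∧ w1 < q ∧ q < w2) (P h) hu hv
  obtain ⟨c', rfl, hc1, hc2⟩ := hc
  refine ⟨some c', d, hedge, ?_⟩
  have hadj : fareyGraph.Adj (some c') d :=
    (fareyGraph.mem_edgeSet).mp ((P h).edges_subset_edgeSet hedge)
  have hdsupp : d ∈ (P h).support := (P h).snd_mem_support_of_mem_edges hedge
  -- d is not w1 nor w2
  have hdw1 : d ≠ some w1 := by
    rintro rfl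
    obtain ⟨n1, hn1⟩ := hw1
    rcases hbranch h _ hdsupp ⟨n1, hn1⟩ with h' | h'
    · exact huw1 h'.symm
    · exact hvw1 h'.symm
  have hdw2 : d ≠ some w2 := by
    rintro rfl
    obtain ⟨n2, hn2⟩ := hw2
    rcases hbranch h _ hdsupp ⟨n2, hn2⟩ with h' | h'
    · exact huw2 h'.symm
    · exact hvw2 h'.symm
  -- basic bounds for c'
  have habs1 : -(|w1| + |w2| + 1) ≤ c' := by
    have := neg_abs_le w1
    have := abs_nonneg w2
    linarith
  have habs2 : c' ≤ |w1| + |w2| + 1 := by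
    have := le_abs_self w2
    have := abs_nonneg w1
    linarith
  have hD1 : w1.den ≤ max w1.den w2.den := le_max_left _ _
  have hD2 : w2.den ≤ max w1.den w2.den := le_max_right _ _
  rcases Option.eq_none_or_eq_some d with rfl | ⟨d', rfl⟩
  · -- d = ∞ : c' is an integer
    have hden : c'.den = 1 := farey_adj_inf hadj
    refine ⟨⟨c', ⟨abs_le.mpr ⟨habs1, habs2⟩, ?_⟩, rfl⟩, Set.mem_insert _ _⟩
    rw [hden]
    exact le_trans w1.pos hD1
  · -- d = some d'
    have hd' : d' < w1 ∨ w2 < d' := by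
      have : ¬ (w1 < d' ∧ d' < w2) := fun hh => hd ⟨d', rfl, hh.1, hh.2⟩
      have h1 : d' ≠ w1 := fun e => hdw1 (by rw [e])
      have h2 : d' ≠ w2 := fun e => hdw2 (by rw [e])
      rcases lt_trichotomy d' w1 with h' | h' | h'
      · exact Or.inl h'
      · exact absurd h' h1
      · rcases lt_trichotomy d' w2 with h'' | h'' | h''
        · exact absurd ⟨h', h''⟩ this
        · exact absurd h'' h2
        · exact Or.inr h''
    have hclose : |c' - d'| ≤ 1 := farey_adj_close hadj
    have hc'le : c' - d' ≤ 1 := le_trans (le_abs_self _) hclose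
    have hd'le : d' - c' ≤ 1 := by
      have := neg_abs_le (c' - d'); linarith [abs_le.mp hclose]
    rcases hd' with hlt | hgt
    · -- d' < w1 < c' : between lemma at w1
      have hden := farey_adj_between (hadj.symm) hlt hc1
      refine ⟨⟨c', ⟨abs_le.mpr ⟨habs1, habs2⟩, by omega⟩, rfl⟩,
        Set.mem_insert_of_mem _ ⟨d', ⟨abs_le.mpr ⟨?_, ?_⟩, by omega⟩, rfl⟩⟩
      · have := neg_abs_le w1
        have := abs_nonneg w2
        linarith
      · have := le_abs_self w1
        have := abs_nonneg w2
        linarith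
    · -- c' < w2 < d' : between lemma at w2
      have hden := farey_adj_between hadj hc2 hgt
      refine ⟨⟨c', ⟨abs_le.mpr ⟨habs1, habs2⟩, by omega⟩, rfl⟩,
        Set.mem_insert_of_mem _ ⟨d', ⟨abs_le.mpr ⟨?_, ?_⟩, by omega⟩, rfl⟩⟩
      · have := neg_abs_le w2
        have := abs_nonneg w1
        linarith
      · have := le_abs_self w2
        have := abs_nonneg w1
        linarith

end KaF2
section KaF3

open SimpleGraph

private lemma farey_main_cfg {α : ℕ → Option ℚ}
    {P : ∀ ⦃u v : ℕ⦄, (⊤ : SimpleGraph ℕ).Adj u v → fareyGraph.Walk (α u) (α v)}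
    (himm : IsStrongImmersion (⊤ : SimpleGraph ℕ) fareyGraph α P)
    (w1 w2 p : ℚ) (T : Set ℚ) (hT : T.Infinite) (hw : w1 < w2)
    (hw1 : some w1 ∈ Set.range α) (hw2 : some w2 ∈ Set.range α)
    (hp : some p ∈ Set.range α) (hTα : ∀ f ∈ T, some f ∈ Set.range α)
    (hpw1 : p ≠ w1) (hpw2 : p ≠ w2)
    (hside : (w1 < p ∧ p < w2 ∧ ∀ f ∈ T, f < w1 ∨ w2 < f)
           ∨ ((p < w1 ∨ w2 < p) ∧ ∀ f ∈ T, w1 < f ∧ f < w2)) : False := by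
  classical
  -- every f in T is different from p, w1, w2
  have hfp : ∀ f ∈ T, f ≠ p := by
    intro f hf he
    rcases hside with ⟨h1, h2, h3⟩ | ⟨h1, h2⟩
    · rcases h3 f hf with h' | h' <;> subst he <;> linarith
    · obtain ⟨h2a, h2b⟩ := h2 f hf
      rcases h1 with h' | h' <;> subst he <;> linarith
  have H : ∀ f ∈ T, ∃ (u v : ℕ) (c d : Option ℚ), u ≠ v ∧
      ((α u = some f ∧ α v = some p) ∨ (α u = some p ∧ α v = some f)) ∧
      (∀ h : (⊤ : SimpleGraph ℕ).Adj u v, s(c, d) ∈ (P h).edges) ∧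
      (c, d) ∈ fKF w1 w2 := by
    intro f hf
    obtain ⟨nf, hnf⟩ := hTα f hf
    obtain ⟨np, hnp⟩ := hp
    have hfw1 : f ≠ w1 := by
      intro he
      rcases hside with ⟨h1, h2, h3⟩ | ⟨h1, h2⟩
      · rcases h3 f hf with h' | h' <;> subst he <;> linarith
      · obtain ⟨h2a, h2b⟩ := h2 f hf; subst he; linarith
    have hfw2 : f ≠ w2 := by
      intro he
      rcases hside with ⟨h1, h2, h3⟩ | ⟨h1, h2⟩
      · rcases h3 f hf with h' | h' <;> subst he <;> linarith
      · obtain ⟨h2a, h2b⟩ := h2 f hf; subst he; linarith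
    have hne : nf ≠ np := by
      intro he
      apply hfp f hf
      have : some f = some p := by rw [← hnf, he, hnp]
      exact Option.some.inj this
    rcases hside with ⟨h1, h2, h3⟩ | ⟨h1, h2⟩
    · -- p inside, f outside: walk from α np to α nf
      have hadj : (⊤ : SimpleGraph ℕ).Adj np nf := by simp [hne.symm]
      obtain ⟨c, d, hcd, hKF⟩ := farey_cross_pair himm hadj hw hw1 hw2
        ⟨p, hnp, h1, h2⟩
        (by rintro ⟨q, hq, hq1, hq2⟩
            rw [hnf] at hq
            obtain rfl := Option.some.inj hq
            rcases h3 f hf with h' | h' <;> linarith)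
        (by rw [hnp]; exact fun e => hpw1 (Option.some.inj e))
        (by rw [hnp]; exact fun e => hpw2 (Option.some.inj e))
        (by rw [hnf]; exact fun e => hfw1 (Option.some.inj e))
        (by rw [hnf]; exact fun e => hfw2 (Option.some.inj e))
      exact ⟨np, nf, c, d, hne.symm, Or.inr ⟨hnp, hnf⟩,
        fun h' => by rwa [Subsingleton.elim h' hadj], hKF⟩
    · -- f inside, p outside: walk from α nf to α np
      have hadj : (⊤ : SimpleGraph ℕ).Adj nf np := by simp [hne]
      obtain ⟨hfi1, hfi2⟩ := h2 f hf
      obtain ⟨c, d, hcd, hKF⟩ := farey_cross_pair himm hadj hw hw1 hw2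
        ⟨f, hnf, hfi1, hfi2⟩
        (by rintro ⟨q, hq, hq1, hq2⟩
            rw [hnp] at hq
            obtain rfl := Option.some.inj hq
            rcases h1 with h' | h' <;> linarith)
        (by rw [hnf]; exact fun e => hfw1 (Option.some.inj e))
        (by rw [hnf]; exact fun e => hfw2 (Option.some.inj e))
        (by rw [hnp]; exact fun e => hpw1 (Option.some.inj e))
        (by rw [hnp]; exact fun e => hpw2 (Option.some.inj e))
      exact ⟨nf, np, c, d, hne, Or.inl ⟨hnf, hnp⟩,
        fun h' => by rwa [Subsingleton.elim h' hadj], hKF⟩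
  choose! u v c d hne hor hmem hKF using H
  -- pigeonhole
  obtain ⟨f1, hf1, f2, hf2, hf12, heq⟩ :=
    hT.exists_ne_map_eq_of_mapsTo (f := fun f => (c f, d f))
      (fun f hf => hKF f hf) (fKF_finite w1 w2)
  have hadj1 : (⊤ : SimpleGraph ℕ).Adj (u f1) (v f1) := by simp [hne f1 hf1]
  have hadj2 : (⊤ : SimpleGraph ℕ).Adj (u f2) (v f2) := by simp [hne f2 hf2]
  have hkeys : s(u f1, v f1) ≠ s(u f2, v f2) := by
    intro he
    rw [Sym2.eq_iff] at he
    have himg : ∀ (x : ℕ), (x = u f1 ∨ x = v f1) → α x = some f1 ∨ α x = some p := by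
      intro x hx
      rcases hor f1 hf1 with ⟨ha, hb⟩ | ⟨ha, hb⟩ <;> rcases hx with rfl | rfl <;> tauto
    have himg2 : ∀ (x : ℕ), (x = u f2 ∨ x = v f2) → α x = some f2 ∨ α x = some p := by
      intro x hx
      rcases hor f2 hf2 with ⟨ha, hb⟩ | ⟨ha, hb⟩ <;> rcases hx with rfl | rfl <;> tauto
    -- some f1 is the α-image of u f1 or v f1
    have hx1 : ∃ x, (x = u f1 ∨ x = v f1) ∧ α x = some f1 := by
      rcases hor f1 hf1 with ⟨ha, hb⟩ | ⟨ha, hb⟩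
      · exact ⟨u f1, Or.inl rfl, ha⟩
      · exact ⟨v f1, Or.inr rfl, hb⟩
    obtain ⟨x, hx, hax⟩ := hx1
    have hx2 : x = u f2 ∨ x = v f2 := by
      rcases he with ⟨e1, e2⟩ | ⟨e1, e2⟩ <;> rcases hx with rfl | rfl <;> tauto
    rcases himg2 x hx2 with h' | h'
    · rw [hax] at h'
      exact hf12 (Option.some.inj h'.symm).symm
    · rw [hax] at h'
      exact hfp f1 hf1 (Option.some.inj h'.symm).symm
  have hdisj := himm.2.2.1 hadj1 hadj2 hkeys
  have hm1 : s(c f1, d f1) ∈ (P hadj1).edges := hmem f1 hf1 hadj1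
  have hm2 : s(c f1, d f1) ∈ (P hadj2).edges := by
    have h2' := hmem f2 hf2 hadj2
    have : (c f1, d f1) = (c f2, d f2) := heq
    rw [Prod.mk.injEq] at this
    rw [this.1, this.2]
    exact h2'
  exact hdisj _ hm1 hm2

end KaF3
/-- `K^{ℵ₀}` is not strongly immersed in the Farey graph. -/
theorem Kaleph0_not_immersed_in_farey :
    ¬ StronglyImmersed (⊤ : SimpleGraph ℕ) fareyGraph := by
  rintro ⟨α, P, himm⟩
  classical
  have hinj := himm.1
  have hrange : (Set.range α).Infinite := Set.infinite_range_of_injective hinj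
  have hdiff : ((Set.range α) \ {none}).Infinite := hrange.diff (Set.finite_singleton _)
  set S : Set ℚ := {q | some q ∈ Set.range α} with hSdef
  have hsub : (Set.range α \ {none}) ⊆ some '' S := by
    rintro x ⟨hx, hxn⟩
    rcases x with _ | q
    · exact absurd rfl hxn
    · exact ⟨q, hx, rfl⟩
  have hSinf : S.Infinite := Set.Infinite.of_image some (hdiff.mono hsub)
  obtain ⟨t, htS, htcard⟩ := hSinf.exists_subset_card_eq 5
  set iso := t.orderIsoOfFin htcard with hiso
  set b : Fin 5 → ℚ := fun i => (iso i : ℚ) with hb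
  have hbS : ∀ i, b i ∈ S := fun i => htS (iso i).2
  have hmono : ∀ i j : Fin 5, i < j → b i < b j :=
    fun i j hij => Subtype.coe_lt_coe.mpr (iso.strictMono hij)
  have h01 : b 0 < b 1 := hmono 0 1 (by decide)
  have h12 : b 1 < b 2 := hmono 1 2 (by decide)
  have h23 : b 2 < b 3 := hmono 2 3 (by decide)
  have h13 : b 1 < b 3 := lt_trans h12 h23
  by_cases hio : (S ∩ Set.Ioo (b 1) (b 3)).Infinite
  · exact farey_main_cfg himm (b 1) (b 3) (b 0) _ hio h13
      (hbS 1) (hbS 3) (hbS 0) (fun f hf => hf.1)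
      (ne_of_lt h01) (ne_of_lt (lt_trans h01 h13))
      (Or.inr ⟨Or.inl h01, fun f hf => ⟨hf.2.1, hf.2.2⟩⟩)
  · by_cases hlo : (S ∩ Set.Iio (b 1)).Infinite
    · exact farey_main_cfg himm (b 1) (b 3) (b 2) _ hlo h13
        (hbS 1) (hbS 3) (hbS 2) (fun f hf => hf.1)
        (ne_of_gt h12) (ne_of_lt h23)
        (Or.inl ⟨h12, h23, fun f hf => Or.inl hf.2⟩)
    · have hhi : (S ∩ Set.Ioi (b 3)).Infinite := by
        by_contra hh
        rw [Set.not_infinite] at hio hlo hh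
        apply hSinf
        have hSsub : S ⊆ ((S ∩ Set.Iio (b 1)) ∪ (S ∩ Set.Ioo (b 1) (b 3))
            ∪ (S ∩ Set.Ioi (b 3))) ∪ {b 1, b 3} := by
          intro q hq
          rcases lt_trichotomy q (b 1) with h' | h' | h'
          · exact Or.inl (Or.inl (Or.inl ⟨hq, h'⟩))
          · exact Or.inr (Or.inl h')
          · rcases lt_trichotomy q (b 3) with h'' | h'' | h''
            · exact Or.inl (Or.inl (Or.inr ⟨hq, h', h''⟩))
            · exact Or.inr (Or.inr h'')
            · exact Or.inl (Or.inr ⟨hq, h''⟩)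
        exact Set.Finite.subset (((hlo.union hio).union hh).union
          ((Set.finite_singleton _).insert _)) hSsub
      exact farey_main_cfg himm (b 1) (b 3) (b 2) _ hhi h13
        (hbS 1) (hbS 3) (hbS 2) (fun f hf => hf.1)
        (ne_of_gt h12) (ne_of_lt h23)
        (Or.inl ⟨h12, h23, fun f hf => Or.inr hf.2⟩)
end

section
/- If ((L,≤_L),(P_n)_{n∈ℕ}) is a wildly presented grain line, then the halved Farey graph is strongly immersed in the graph ⋃P defined by it. -/
open SimpleGraph

section WalkExtract

variable {V : Type*} {G : SimpleGraph V}

lemma support_eq_dropLast {a b : V} (r : G.Walk a b) :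
    r.support = r.support.dropLast ++ [b] := by
  have h1 := List.dropLast_append_getLast r.support_ne_nil
  rwa [Walk.getLast_support, eq_comm] at h1

lemma walk_support_split {s t u : V} [DecidableEq V] (p : G.Walk s t) (hu : u ∈ p.support) :
    p.support = ((p.takeUntil u hu).support).dropLast ++ (p.dropUntil u hu).support := by
  have h2 := support_eq_dropLast (p.takeUntil u hu)
  have h3 : (p.dropUntil u hu).support = u :: (p.dropUntil u hu).support.tail :=
    (p.dropUntil u hu).support_eq_cons
  calc p.support = ((p.takeUntil u hu).append (p.dropUntil u hu)).support := by
        conv_lhs => rw [← p.take_spec hu]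
    _ = (p.takeUntil u hu).support ++ (p.dropUntil u hu).support.tail :=
        Walk.support_append _ _
    _ = (((p.takeUntil u hu).support).dropLast ++ [u]) ++ (p.dropUntil u hu).support.tail := by
        exact congrArg (fun l => l ++ (p.dropUntil u hu).support.tail) h2
    _ = ((p.takeUntil u hu).support).dropLast ++ (u :: (p.dropUntil u hu).support.tail) := by
        simp only [List.append_assoc, List.singleton_append]
    _ = ((p.takeUntil u hu).support).dropLast ++ (p.dropUntil u hu).support := by
        rw [← h3]

lemma walk_extract {s t u v : V} (p : G.Walk s t) (hp : p.IsPath)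
    (h : List.Sublist [u, v] p.support) :
    ∃ q : G.Walk u v, q.IsPath ∧ (∀ e ∈ q.edges, e ∈ p.edges) ∧
      (∀ w ∈ q.support, w ∈ p.support) ∧
      (∀ w ∈ q.support, w ≠ u → List.Sublist [u, w] p.support) ∧
      (∀ w ∈ q.support, w ≠ v → List.Sublist [w, v] p.support) := by
  classical
  have hnd : p.support.Nodup := hp.support_nodup
  have hu : u ∈ p.support := h.subset (by simp)
  set d := p.dropUntil u hu with hd
  have hsplit := walk_support_split p hu
  have hv : v ∈ d.support := by
    rw [hsplit] at h hnd
    rcases List.sublist_append_iff.mp h with ⟨a, b, hab, ha, hb⟩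
    have hdisj := List.disjoint_of_nodup_append hnd
    match a, hab, ha with
    | [], hab, ha =>
      simp only [List.nil_append] at hab
      exact (hab ▸ hb).subset (by simp)
    | [w], hab, ha =>
      simp only [List.cons_append, List.nil_append, List.cons.injEq] at hab
      obtain ⟨hw, hbv⟩ := hab
      exact (hbv ▸ hb).subset (by simp)
    | w :: w' :: a', hab, ha =>
      exfalso
      simp only [List.cons_append, List.cons.injEq] at hab
      obtain ⟨hw, hw', -⟩ := hab
      have hu2 : u ∈ ((p.takeUntil u hu).support).dropLast :=
        ha.subset (by simp [hw])
      exact hdisj hu2 d.start_mem_support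
  set q := d.takeUntil v hv with hq
  have hqd : List.Sublist q.support d.support := by
    have hds : d.support = q.support ++ (d.dropUntil v hv).support.tail := by
      conv_lhs => rw [← d.take_spec hv]
      exact Walk.support_append _ _
    rw [hds]
    exact List.sublist_append_left _ _
  have hdp : List.Sublist d.support p.support := by
    rw [hsplit]
    exact List.sublist_append_right _ _
  have hqp : List.Sublist q.support p.support := hqd.trans hdp
  refine ⟨q, (hp.dropUntil hu).takeUntil hv, ?_, ?_, ?_, ?_⟩
  · intro e he
    exact (p.edges_dropUntil_subset hu) ((d.edges_takeUntil_subset hv) he)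
  · intro w hw
    exact (p.support_dropUntil_subset hu) ((d.support_takeUntil_subset hv) hw)
  · intro w hw hwu
    have h1 : q.support = u :: q.support.tail := q.support_eq_cons
    have hwt : w ∈ q.support.tail := by
      rw [h1] at hw
      rcases List.mem_cons.mp hw with h' | h'
      · exact absurd h' hwu
      · exact h'
    have : List.Sublist [u, w] q.support := by
      rw [h1]
      exact List.Sublist.cons₂ u (List.singleton_sublist.mpr hwt)
    exact this.trans hqp
  · intro w hw hwv
    have h2 := support_eq_dropLast q
    have hwt : w ∈ q.support.dropLast := by
      rw [h2] at hw
      rcases List.mem_append.mp hw with h' | h'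
      · exact h'
      · exact absurd (by simpa using h') hwv
    have : List.Sublist [w, v] q.support := by
      rw [h2]
      exact List.Sublist.append (List.singleton_sublist.mpr hwt) (List.Sublist.refl [v])
    exact this.trans hqp

end WalkExtract

namespace GrainLine

variable {V : Type*} {G : SimpleGraph V} {x y : V} (gl : GrainLine G x y)

lemma mem_supp_iff_vDepth {z : V} (hz : z ∈ gl.L) (n : ℕ) :
    z ∈ (gl.P n).support ↔ gl.vDepth z ≤ n := by
  obtain ⟨N, hN⟩ := (gl.gl1 z).mp hz
  have hmem : N ∈ {n | z ∈ (gl.P n).support} := (hN N).mpr le_rfl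
  have h1 : gl.vDepth z ≤ N := Nat.sInf_le hmem
  have h2 : z ∈ (gl.P (gl.vDepth z)).support := Nat.sInf_mem ⟨N, hmem⟩
  have h3 : N ≤ gl.vDepth z := (hN _).mp h2
  rw [hN n]
  omega

lemma ne_of_chain {u v w : V} (hu : u ∈ gl.L) (hv : v ∈ gl.L)
    (h1 : gl.le u v) (h2 : u ≠ v) (h3 : gl.le v w) : u ≠ w := by
  rintro rfl
  exact h2 (gl.le_antisymm u hu v hv h1 h3)

lemma exists_min {S : Set V} (hS : S.Finite) (hne : S.Nonempty) (hsub : S ⊆ gl.L) :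
    ∃ z ∈ S, ∀ z' ∈ S, gl.le z z' := by
  classical
  have key : ∀ s : Finset V, s.Nonempty → ↑s ⊆ gl.L → ∃ z ∈ s, ∀ z' ∈ s, gl.le z z' := by
    intro s
    induction s using Finset.induction_on with
    | empty => rintro ⟨z, hz⟩ _; simp at hz
    | @insert a s ha ih =>
      intro _ hsub'
      have haL : a ∈ gl.L := hsub' (by simp)
      by_cases hs : s.Nonempty
      · obtain ⟨z, hz, hmin⟩ := ih hs (fun t ht => hsub' (by simp [ht]))
        have hzL : z ∈ gl.L := hsub' (by simp [hz])
        rcases gl.le_total a haL z hzL with hle | hle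
        · refine ⟨a, Finset.mem_insert_self a s, ?_⟩
          intro z' hz'
          rcases Finset.mem_insert.mp hz' with heq | hz'
          · rw [heq]; exact gl.le_refl a haL
          · exact gl.le_trans a haL z hzL z' (hsub' (by simp [hz'])) hle (hmin z' hz')
        · refine ⟨z, Finset.mem_insert_of_mem hz, ?_⟩
          intro z' hz'
          rcases Finset.mem_insert.mp hz' with heq | hz'
          · rw [heq]; exact hle
          · exact hmin z' hz'
      · rw [Finset.not_nonempty_iff_eq_empty] at hs
        subst hs
        refine ⟨a, by simp, ?_⟩
        intro z' hz'
        rcases Finset.mem_insert.mp hz' with heq | hz'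
        · rw [heq]; exact gl.le_refl a haL
        · simp at hz'
  obtain ⟨z0, hz0⟩ := hne
  obtain ⟨z, hz, hmin⟩ := key hS.toFinset ⟨z0, hS.mem_toFinset.mpr hz0⟩
    (fun t ht => hsub (hS.mem_toFinset.mp ht))
  exact ⟨z, hS.mem_toFinset.mp hz, fun z' hz' => hmin z' (hS.mem_toFinset.mpr hz')⟩

lemma lowdepth_finite (T : ℕ) : {z | z ∈ gl.L ∧ gl.vDepth z < T}.Finite := by
  apply Set.Finite.subset
    (Set.Finite.biUnion (Set.finite_Iio T) (fun m _ => (gl.P m).support.finite_toSet))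
  rintro z ⟨hzL, hzd⟩
  exact Set.mem_biUnion (show gl.vDepth z ∈ Set.Iio T from hzd)
    ((gl.mem_supp_iff_vDepth hzL _).mpr le_rfl)

lemma mem_Llt_of_lt {z : V} (hz : z ∈ gl.L) {n : ℕ} (h : gl.vDepth z < n) : z ∈ gl.Llt n :=
  ⟨hz, gl.vDepth z, h, (gl.mem_supp_iff_vDepth hz _).mpr le_rfl⟩

lemma exists_between (hwp : gl.WildlyPresented) {u v : V} (hu : u ∈ gl.L) (hv : v ∈ gl.L)
    (hne : u ≠ v) (hle : gl.le u v) (T : ℕ) :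
    ∃ w, w ∈ gl.L ∧ w ≠ u ∧ w ≠ v ∧ gl.le u w ∧ gl.le w v ∧ T ≤ gl.vDepth w := by
  classical
  set S := {z | (z ∈ gl.L ∧ gl.vDepth z < T) ∧ gl.le u z ∧ gl.le z v ∧ z ≠ u ∧ z ≠ v}
    with hSdef
  have hSfin : S.Finite := (gl.lowdepth_finite T).subset (fun z hz => hz.1)
  by_cases hS : S.Nonempty
  · obtain ⟨z1, hz1S, hz1min⟩ := gl.exists_min hSfin hS (fun z hz => hz.1.1)
    obtain ⟨⟨hz1L, hz1d⟩, hz1le, hz1lev, hz1u, hz1v⟩ := hz1S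
    set N := max (gl.vDepth u) (gl.vDepth z1) + 1 with hNdef
    have hN1 : 1 ≤ N := Nat.succ_le_succ (Nat.zero_le _)
    have huLlt : u ∈ gl.Llt N :=
      gl.mem_Llt_of_lt hu (Nat.lt_succ_of_le (le_max_left _ _))
    have hz1Llt : z1 ∈ gl.Llt N :=
      gl.mem_Llt_of_lt hz1L (Nat.lt_succ_of_le (le_max_right _ _))
    obtain ⟨w, hwL, hwu, hwz1, hluw, hlwz1, -⟩ :=
      hwp N hN1 u z1 huLlt hz1Llt (Ne.symm hz1u) hz1le
    have hwv : w ≠ v := by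
      rintro rfl
      exact hz1v (gl.le_antisymm z1 hz1L w hwL hz1lev hlwz1)
    have hlewv : gl.le w v := gl.le_trans w hwL z1 hz1L v hv hlwz1 hz1lev
    refine ⟨w, hwL, hwu, hwv, hluw, hlewv, ?_⟩
    by_contra hdep
    push_neg at hdep
    have hwS : w ∈ S := ⟨⟨hwL, hdep⟩, hluw, hlewv, hwu, hwv⟩
    exact hwz1 (gl.le_antisymm w hwL z1 hz1L hlwz1 (hz1min w hwS))
  · set N := max (gl.vDepth u) (gl.vDepth v) + 1 with hNdef
    have hN1 : 1 ≤ N := Nat.succ_le_succ (Nat.zero_le _)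
    have huLlt : u ∈ gl.Llt N :=
      gl.mem_Llt_of_lt hu (Nat.lt_succ_of_le (le_max_left _ _))
    have hvLlt : v ∈ gl.Llt N :=
      gl.mem_Llt_of_lt hv (Nat.lt_succ_of_le (le_max_right _ _))
    obtain ⟨w, hwL, hwu, hwv, hluw, hlwv, -⟩ := hwp N hN1 u v huLlt hvLlt hne hle
    refine ⟨w, hwL, hwu, hwv, hluw, hlwv, ?_⟩
    by_contra hdep
    push_neg at hdep
    exact hS ⟨w, ⟨hwL, hdep⟩, hluw, hlwv, hwu, hwv⟩

end GrainLine

namespace GrainLine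

variable {V : Type*} {G : SimpleGraph V} {x y : V} (gl : GrainLine G x y)

/-- Invariant for level-`n` data of the recursive construction. -/
def Inv (n : ℕ) (A : ℕ → V) (c : ℕ) : Prop :=
  A 0 = x ∧ A (2^n) = y ∧ (∀ k ≤ 2^n, A k ∈ gl.L ∧ gl.vDepth (A k) < c) ∧
    ∀ k < 2^n, gl.le (A k) (A (k+1)) ∧ A k ≠ A (k+1)

/-- Relation between consecutive levels of the construction. -/
def Step (n : ℕ) (A : ℕ → V) (c : ℕ) (A' : ℕ → V) (c' : ℕ) : Prop :=
  (∀ k, A' (2*k) = A k) ∧ (∀ k < 2^n, c + 2^n ≤ gl.vDepth (A' (2*k+1))) ∧ c + 2^n ≤ c'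

lemma step_ex (hwp : gl.WildlyPresented) (n : ℕ) (A : ℕ → V) (c : ℕ) (h : gl.Inv n A c) :
    ∃ A' c', gl.Inv (n+1) A' c' ∧ gl.Step n A c A' c' := by
  classical
  obtain ⟨hA0, hAy, hmem, hmono⟩ := h
  have hch : ∀ k : ℕ, ∃ w, k < 2^n →
      w ∈ gl.L ∧ w ≠ A k ∧ w ≠ A (k+1) ∧ gl.le (A k) w ∧ gl.le w (A (k+1)) ∧
        c + 2^n ≤ gl.vDepth w := by
    intro k
    by_cases hk : k < 2^n
    · obtain ⟨w, hw⟩ := gl.exists_between hwp (hmem k (le_of_lt hk)).1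
        (hmem (k+1) hk).1 (hmono k hk).2 (hmono k hk).1 (c + 2^n)
      exact ⟨w, fun _ => ⟨hw.1, hw.2.1, hw.2.2.1, hw.2.2.2.1, hw.2.2.2.2.1, hw.2.2.2.2.2⟩⟩
    · exact ⟨x, fun h' => absurd h' hk⟩
  choose B hB using hch
  set A' : ℕ → V := fun j => if j % 2 = 0 then A (j / 2) else B (j / 2) with hA'
  set c' := ((Finset.range (2^(n+1)+1)).sup fun k => gl.vDepth (A' k)) + c + 2^n + 1 with hc'
  have hp : 2^(n+1) = 2*2^n := by ring
  have hAe : ∀ k, A' (2*k) = A k := by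
    intro k
    have h1 : (2*k) % 2 = 0 := by omega
    have h2 : (2*k)/2 = k := by omega
    simp [hA', h1, h2]
  have hAo : ∀ k, A' (2*k+1) = B k := by
    intro k
    have h1 : (2*k+1) % 2 = 1 := by omega
    have h2 : (2*k+1)/2 = k := by omega
    simp [hA', h1, h2]
  refine ⟨A', c', ⟨?_, ?_, ?_, ?_⟩, hAe, ?_, by omega⟩
  · have h := hAe 0
    norm_num at h
    rw [h, hA0]
  · have h := hAe (2^n)
    rw [← hp] at h
    rw [h, hAy]
  · intro k hk
    constructor
    · rcases Nat.even_or_odd k with ⟨j, hj⟩ | ⟨j, hj⟩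
      · have hj2 : k = 2*j := by omega
        have hjn : j ≤ 2^n := by omega
        rw [hj2, hAe j]
        exact (hmem j hjn).1
      · have hj2 : k = 2*j+1 := by omega
        have hjn : j < 2^n := by omega
        rw [hj2, hAo j]
        exact (hB j hjn).1
    · have hk' : k ∈ Finset.range (2^(n+1)+1) := Finset.mem_range.mpr (by omega)
      rw [hc']
      exact Nat.lt_succ_of_le (Nat.le_trans
        (Finset.le_sup (f := fun j => gl.vDepth (A' j)) hk') (by omega))
  · intro k hk
    rcases Nat.even_or_odd k with ⟨j, hj⟩ | ⟨j, hj⟩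
    · have hj2 : k = 2*j := by omega
      have hjn : j < 2^n := by omega
      have e1 : A' k = A j := by rw [hj2, hAe j]
      have e2 : A' (k+1) = B j := by rw [show k+1 = 2*j+1 by omega, hAo j]
      rw [e1, e2]
      exact ⟨(hB j hjn).2.2.2.1, Ne.symm (hB j hjn).2.1⟩
    · have hj2 : k = 2*j+1 := by omega
      have hjn : j < 2^n := by omega
      have e1 : A' k = B j := by rw [hj2, hAo j]
      have e2 : A' (k+1) = A (j+1) := by rw [show k+1 = 2*(j+1) by omega, hAe (j+1)]
      rw [e1, e2]
      exact ⟨(hB j hjn).2.2.2.2.1, (hB j hjn).2.2.1⟩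
  · intro k hk
    rw [hAo k]
    exact (hB k hk).2.2.2.2.2

variable (hwp : gl.WildlyPresented)

open Classical in
/-- The recursively constructed sequence of level data. -/
noncomputable def seq : ℕ → (ℕ → V) × ℕ
  | 0 => ⟨fun k => if k = 0 then x else y, max (gl.vDepth x) (gl.vDepth y) + 1⟩
  | n+1 =>
    if h : gl.Inv n (seq n).1 (seq n).2 then
      ⟨(gl.step_ex hwp n _ _ h).choose, (gl.step_ex hwp n _ _ h).choose_spec.choose⟩
    else seq n

lemma inv_seq : ∀ n, gl.Inv n (gl.seq hwp n).1 (gl.seq hwp n).2 := by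
  intro n
  induction n with
  | zero =>
    refine ⟨by simp [seq], by simp [seq], ?_, ?_⟩
    · intro k hk
      have hk1 : k ≤ 1 := by simpa using hk
      interval_cases k
      · simp only [seq, if_pos rfl]
        exact ⟨gl.x_mem, Nat.lt_succ_of_le (le_max_left _ _)⟩
      · simp only [seq, if_neg one_ne_zero]
        exact ⟨gl.y_mem, Nat.lt_succ_of_le (le_max_right _ _)⟩
    · intro k hk
      have hk0 : k = 0 := by
        have : (2:ℕ)^0 = 1 := by norm_num
        omega
      subst hk0
      simp only [seq, if_pos rfl, if_neg one_ne_zero]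
      exact ⟨gl.x_min y gl.y_mem, gl.ne_xy⟩
  | succ n ih =>
    rw [seq, dif_pos ih]
    exact (gl.step_ex hwp n _ _ ih).choose_spec.choose_spec.1

lemma step_seq (n : ℕ) :
    gl.Step n (gl.seq hwp n).1 (gl.seq hwp n).2 (gl.seq hwp (n+1)).1 (gl.seq hwp (n+1)).2 := by
  have ih := gl.inv_seq hwp n
  rw [seq, dif_pos ih]
  exact (gl.step_ex hwp n _ _ ih).choose_spec.choose_spec.2

/-- The branch vertices of the construction. -/
noncomputable def AA (n k : ℕ) : V := (gl.seq hwp n).1 k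

/-- The stage bounds of the construction. -/
noncomputable def cc (n : ℕ) : ℕ := (gl.seq hwp n).2

lemma AA_even (n k : ℕ) : gl.AA hwp (n+1) (2*k) = gl.AA hwp n k := (gl.step_seq hwp n).1 k

lemma AA_odd_depth (n k : ℕ) (hk : k < 2^n) :
    gl.cc hwp n + 2^n ≤ gl.vDepth (gl.AA hwp (n+1) (2*k+1)) := (gl.step_seq hwp n).2.1 k hk

lemma cc_step (n : ℕ) : gl.cc hwp n + 2^n ≤ gl.cc hwp (n+1) := (gl.step_seq hwp n).2.2

lemma AA_zero (n : ℕ) : gl.AA hwp n 0 = x := (gl.inv_seq hwp n).1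

lemma AA_top (n : ℕ) : gl.AA hwp n (2^n) = y := (gl.inv_seq hwp n).2.1

lemma AA_mem (n k : ℕ) (hk : k ≤ 2^n) : gl.AA hwp n k ∈ gl.L :=
  ((gl.inv_seq hwp n).2.2.1 k hk).1

lemma AA_depth (n k : ℕ) (hk : k ≤ 2^n) : gl.vDepth (gl.AA hwp n k) < gl.cc hwp n :=
  ((gl.inv_seq hwp n).2.2.1 k hk).2

lemma AA_adj (n k : ℕ) (hk : k < 2^n) :
    gl.le (gl.AA hwp n k) (gl.AA hwp n (k+1)) ∧ gl.AA hwp n k ≠ gl.AA hwp n (k+1) :=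
  (gl.inv_seq hwp n).2.2.2 k hk

lemma cc_mono {n m : ℕ} (h : n ≤ m) : gl.cc hwp n ≤ gl.cc hwp m := by
  induction h with
  | refl => exact le_rfl
  | step h ih => exact Nat.le_trans ih (Nat.le_trans (Nat.le_add_right _ _) (gl.cc_step hwp _))

lemma ccpow_mono {n m : ℕ} (h : n ≤ m) : gl.cc hwp n + 2^n ≤ gl.cc hwp m + 2^m := by
  induction h with
  | refl => exact le_rfl
  | @step m h ih =>
    have h1 := gl.cc_step hwp m
    have h2 : (2:ℕ)^(m+1) = 2*2^m := by ring
    show gl.cc hwp n + 2^n ≤ gl.cc hwp (m+1) + 2^(m+1)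
    omega

lemma cc_zero : gl.cc hwp 0 = max (gl.vDepth x) (gl.vDepth y) + 1 := rfl

lemma cc_pos (n : ℕ) : 1 ≤ gl.cc hwp n := by
  have h1 : 1 ≤ gl.cc hwp 0 := by rw [gl.cc_zero hwp]; omega
  exact h1.trans (gl.cc_mono hwp (Nat.zero_le n))

lemma AA_lift (n k : ℕ) (hk : k ≤ 2^n) : ∀ m, gl.AA hwp (n+m) (k * 2^m) = gl.AA hwp n k := by
  intro m
  induction m with
  | zero => simp
  | succ m ih =>
    have h1 : k * 2^(m+1) = 2*(k*2^m) := by ring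
    have h2 : n + (m+1) = (n+m)+1 := by omega
    rw [h2, h1, gl.AA_even hwp (n+m) (k*2^m), ih]

lemma AA_mono (n : ℕ) : ∀ b, ∀ a < b, b ≤ 2^n →
    gl.le (gl.AA hwp n a) (gl.AA hwp n b) ∧ gl.AA hwp n a ≠ gl.AA hwp n b := by
  intro b
  induction b with
  | zero => intro a ha; omega
  | succ b ih =>
    intro a ha hb
    rcases Nat.lt_succ_iff_lt_or_eq.mp ha with h | h
    · have hab := ih a h (by omega)
      have hadj := gl.AA_adj hwp n b (by omega)
      have hma := gl.AA_mem hwp n a (by omega)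
      have hmb := gl.AA_mem hwp n b (by omega)
      have hmb1 := gl.AA_mem hwp n (b+1) (by omega)
      exact ⟨gl.le_trans _ hma _ hmb _ hmb1 hab.1 hadj.1,
        gl.ne_of_chain hma hmb hab.1 hab.2 hadj.1⟩
    · subst h
      exact gl.AA_adj hwp n a (by omega)
  termination_by b => b

lemma AA_reflect (n a b : ℕ) (ha : a ≤ 2^n) (hb : b ≤ 2^n)
    (h1 : gl.le (gl.AA hwp n a) (gl.AA hwp n b)) (h2 : gl.AA hwp n a ≠ gl.AA hwp n b) :
    a < b := by
  by_contra h
  push_neg at h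
  rcases eq_or_lt_of_le h with heq | hlt
  · exact h2 (congrArg (gl.AA hwp n) heq.symm)
  · have h3 := gl.AA_mono hwp n a b hlt ha
    exact h2 (gl.le_antisymm _ (gl.AA_mem hwp n a ha) _ (gl.AA_mem hwp n b hb) h1 h3.1)

end GrainLine

lemma dyadic_rep_eq {n n' k k' : ℕ} (h : n ≤ n') (hq : (k:ℚ)/2^n = (k':ℚ)/2^n') :
    k' = k * 2^(n'-n) := by
  rw [div_eq_div_iff (by positivity) (by positivity)] at hq
  have h3 : ((k * 2^(n'-n) : ℕ) : ℚ) * 2^n = ((k' : ℕ) : ℚ) * 2^n := by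
    push_cast
    rw [mul_assoc, ← pow_add, Nat.sub_add_cancel h]
    exact hq
  exact_mod_cast (mul_right_cancel₀ (show ((2:ℚ))^n ≠ 0 by positivity) h3).symm

lemma dyadic_scale (k n s : ℕ) : ((k * 2^s : ℕ) : ℚ)/2^(n+s) = (k:ℚ)/2^n := by
  have h2 : ((2:ℚ))^n ≠ 0 := by positivity
  have h2' : ((2:ℚ))^s ≠ 0 := by positivity
  push_cast
  rw [pow_add]
  field_simp

lemma dyadic_spec (v : DyadicSet) : ∃ n k : ℕ, k ≤ 2^n ∧ (v : ℚ) = (k:ℚ)/2^n := v.2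

namespace GrainLine

variable {V : Type*} {G : SimpleGraph V} {x y : V} (gl : GrainLine G x y)
  (hwp : gl.WildlyPresented)

/-- The immersion's map on vertices. -/
noncomputable def alph (v : DyadicSet) : V :=
  gl.AA hwp (dyadic_spec v).choose (dyadic_spec v).choose_spec.choose

lemma alph_def (v : DyadicSet) :
    ∃ n k : ℕ, k ≤ 2^n ∧ (v:ℚ) = (k:ℚ)/2^n ∧ gl.alph hwp v = gl.AA hwp n k :=
  ⟨_, _, (dyadic_spec v).choose_spec.choose_spec.1,
    (dyadic_spec v).choose_spec.choose_spec.2, rfl⟩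

lemma alph_eq (v : DyadicSet) (n k : ℕ) (hk : k ≤ 2^n) (hv : (v:ℚ) = (k:ℚ)/2^n) :
    gl.alph hwp v = gl.AA hwp n k := by
  obtain ⟨n0, k0, hk0, hv0, hdef⟩ := gl.alph_def hwp v
  rw [hdef]
  rcases Nat.le_total n n0 with h | h
  · have heq := dyadic_rep_eq h (hv.symm.trans hv0)
    have hlift := gl.AA_lift hwp n k hk (n0-n)
    rw [Nat.add_sub_cancel' h] at hlift
    rw [heq, hlift]
  · have heq := dyadic_rep_eq h (hv0.symm.trans hv)
    have hlift := gl.AA_lift hwp n0 k0 hk0 (n-n0)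
    rw [Nat.add_sub_cancel' h] at hlift
    rw [heq, hlift]

lemma alph_order {a b : DyadicSet} (hab : (a:ℚ) < (b:ℚ)) :
    gl.le (gl.alph hwp a) (gl.alph hwp b) ∧ gl.alph hwp a ≠ gl.alph hwp b := by
  obtain ⟨n, k, hk, hv⟩ := dyadic_spec a
  obtain ⟨n', k', hk', hv'⟩ := dyadic_spec b
  set M := max n n' with hM
  have h1 : (a:ℚ) = ((k * 2^(M-n) : ℕ):ℚ)/2^M := by
    rw [hv, ← dyadic_scale k n (M-n), Nat.add_sub_cancel' (le_max_left n n')]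
  have h2 : (b:ℚ) = ((k' * 2^(M-n') : ℕ):ℚ)/2^M := by
    rw [hv', ← dyadic_scale k' n' (M-n'), Nat.add_sub_cancel' (le_max_right n n')]
  have hK : k * 2^(M-n) ≤ 2^M := by
    calc k * 2^(M-n) ≤ 2^n * 2^(M-n) := Nat.mul_le_mul_right _ hk
    _ = 2^M := by rw [← pow_add, Nat.add_sub_cancel' (le_max_left n n')]
  have hK' : k' * 2^(M-n') ≤ 2^M := by
    calc k' * 2^(M-n') ≤ 2^n' * 2^(M-n') := Nat.mul_le_mul_right _ hk'
    _ = 2^M := by rw [← pow_add, Nat.add_sub_cancel' (le_max_right n n')]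
  have e1 : gl.alph hwp a = gl.AA hwp M (k*2^(M-n)) := gl.alph_eq hwp a M _ hK h1
  have e2 : gl.alph hwp b = gl.AA hwp M (k'*2^(M-n')) := gl.alph_eq hwp b M _ hK' h2
  have hlt : k * 2^(M-n) < k' * 2^(M-n') := by
    have hq : ((k * 2^(M-n):ℕ):ℚ)/2^M < ((k' * 2^(M-n'):ℕ):ℚ)/2^M := by
      rw [← h1, ← h2]; exact hab
    have h2M : (0:ℚ) < 2^M := by positivity
    have := (div_lt_div_iff_of_pos_right h2M).mp hq
    exact_mod_cast this
  rw [e1, e2]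
  exact gl.AA_mono hwp M _ _ hlt hK'

lemma alph_inj : Function.Injective (gl.alph hwp) := by
  intro a b hab
  by_contra hne
  have hv : (a:ℚ) ≠ (b:ℚ) := fun h => hne (Subtype.ext h)
  rcases hv.lt_or_gt with h | h
  · exact (gl.alph_order hwp h).2 hab
  · exact (gl.alph_order hwp h).2 hab.symm

lemma alph_mem (v : DyadicSet) : gl.alph hwp v ∈ gl.L := by
  obtain ⟨n, k, hk, hv, hdef⟩ := gl.alph_def hwp v
  rw [hdef]; exact gl.AA_mem hwp n k hk

lemma alph_cases (z : DyadicSet) :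
    gl.alph hwp z = x ∨ gl.alph hwp z = y ∨
      ∃ m j, 1 ≤ m ∧ j % 2 = 1 ∧ j ≤ 2^m ∧ gl.alph hwp z = gl.AA hwp m j := by
  obtain ⟨n, k, hk, hv, hdef⟩ := gl.alph_def hwp z
  rcases eq_or_ne k 0 with rfl | hk0
  · left; rw [hdef, gl.AA_zero]
  rcases eq_or_ne k (2^n) with rfl | hktop
  · right; left; rw [hdef, gl.AA_top]
  right; right
  obtain ⟨e, j, hj, hkej⟩ := Nat.exists_eq_two_pow_mul_odd hk0
  have he : e < n := by
    by_contra h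
    push_neg at h
    have h5 : 2^n ≤ k := by
      calc (2:ℕ)^n ≤ 2^e := Nat.pow_le_pow_right (by norm_num) h
      _ ≤ 2^e * j := Nat.le_mul_of_pos_right _ hj.pos
      _ = k := hkej.symm
    omega
  have hj2 : j ≤ 2^(n-e) := by
    have h1 : j * 2^e ≤ 2^(n-e) * 2^e := by
      rw [← pow_add, Nat.sub_add_cancel (le_of_lt he)]
      calc j * 2^e = k := by rw [hkej]; ring
      _ ≤ 2^n := hk
    exact Nat.le_of_mul_le_mul_right h1 (by positivity)
  refine ⟨n - e, j, by omega, Nat.odd_iff.mp hj, hj2, ?_⟩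
  rw [hdef]
  have hlift := gl.AA_lift hwp (n-e) j hj2 e
  rw [Nat.sub_add_cancel (le_of_lt he)] at hlift
  rw [show k = j * 2^e from by rw [hkej]; ring]
  exact hlift

end GrainLine

namespace GrainLine

variable {V : Type*} {G : SimpleGraph V} {x y : V} (gl : GrainLine G x y)
  (hwp : gl.WildlyPresented)

lemma edge_path (n k : ℕ) (hk : k+1 ≤ 2^n) :
    ∃ q : gl.union.Walk (gl.AA hwp n k) (gl.AA hwp n (k+1)), q.IsPath ∧
      (∀ e ∈ q.edges, e ∈ (gl.P (gl.cc hwp n + k)).edges) ∧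
      (∀ w ∈ q.support, (∃ z : DyadicSet, gl.alph hwp z = w) →
        w = gl.AA hwp n k ∨ w = gl.AA hwp n (k+1)) := by
  classical
  set m := gl.cc hwp n + k with hm
  set u := gl.AA hwp n k with hu
  set v := gl.AA hwp n (k+1) with hv
  have hm1 : 1 ≤ m := Nat.le_trans (gl.cc_pos hwp n) (Nat.le_add_right _ _)
  have huL : u ∈ gl.L := gl.AA_mem hwp n k (by omega)
  have hvL : v ∈ gl.L := gl.AA_mem hwp n (k+1) hk
  have hud : gl.vDepth u < m := by
    have h1 := gl.AA_depth hwp n k (by omega)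
    rw [← hu] at h1
    omega
  have hvd : gl.vDepth v < m := by
    have h1 := gl.AA_depth hwp n (k+1) hk
    rw [← hv] at h1
    omega
  have hadj := gl.AA_adj hwp n k (by omega)
  have hBefore : List.Sublist [u, v] (gl.P m).support := by
    have h3 := gl.gl3 m hm1 u v huL hvL
      ⟨gl.vDepth u, hud, (gl.mem_supp_iff_vDepth huL _).mpr le_rfl⟩
      ⟨gl.vDepth v, hvd, (gl.mem_supp_iff_vDepth hvL _).mpr le_rfl⟩ hadj.2
    exact h3.mp hadj.1
  obtain ⟨q0, hq0path, hq0edges, hq0supp, hq0bu, hq0bv⟩ :=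
    walk_extract (gl.P m) (gl.isPath m) hBefore
  have htrans : ∀ e ∈ q0.edges, e ∈ gl.union.edgeSet := by
    intro e he
    have he' : e ∈ (gl.P m).edges := hq0edges e he
    induction e using Sym2.ind with
    | _ a b => exact (SimpleGraph.mem_edgeSet gl.union).mpr ⟨m, he'⟩
  refine ⟨q0.transfer gl.union htrans, hq0path.transfer htrans, ?_, ?_⟩
  · intro e he
    rw [SimpleGraph.Walk.edges_transfer] at he
    exact hq0edges e he
  · rintro w hw ⟨z, hz⟩
    rw [SimpleGraph.Walk.support_transfer] at hw
    by_contra hcon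
    push_neg at hcon
    obtain ⟨hwu, hwv⟩ := hcon
    have hwP : w ∈ (gl.P m).support := hq0supp w hw
    have hwL : w ∈ gl.L := hz ▸ gl.alph_mem hwp z
    have hwd : gl.vDepth w ≤ m := (gl.mem_supp_iff_vDepth hwL m).mp hwP
    have hbu : List.Sublist [u, w] (gl.P m).support := hq0bu w hw hwu
    have hbv : List.Sublist [w, v] (gl.P m).support := hq0bv w hw hwv
    have hgl3 : gl.vDepth w < m → gl.le u w ∧ gl.le w v := by
      intro hdlt
      have hWit : ∃ m' < m, w ∈ (gl.P m').support :=
        ⟨gl.vDepth w, hdlt, (gl.mem_supp_iff_vDepth hwL _).mpr le_rfl⟩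
      constructor
      · exact (gl.gl3 m hm1 u w huL hwL
          ⟨gl.vDepth u, hud, (gl.mem_supp_iff_vDepth huL _).mpr le_rfl⟩ hWit
          (Ne.symm hwu)).mpr hbu
      · exact (gl.gl3 m hm1 w v hwL hvL hWit
          ⟨gl.vDepth v, hvd, (gl.mem_supp_iff_vDepth hvL _).mpr le_rfl⟩ hwv).mpr hbv
    rcases gl.alph_cases hwp z with hzx | hzy | ⟨m', j, hm', hj, hjle, hzA⟩
    · -- w = x
      have hwx : w = x := hz.symm.trans hzx
      have hdx : gl.vDepth w < m := by
        have h1 := gl.AA_depth hwp 0 0 (by norm_num)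
        rw [gl.AA_zero hwp 0] at h1
        have h2 := gl.cc_mono hwp (Nat.zero_le n)
        rw [hwx]; omega
      have hle := (hgl3 hdx).1
      have hle2 : gl.le w u := by rw [hwx]; exact gl.x_min u huL
      exact hwu (gl.le_antisymm w hwL u huL hle2 hle)
    · -- w = y
      have hwy : w = y := hz.symm.trans hzy
      have hdy : gl.vDepth w < m := by
        have h1 := gl.AA_depth hwp 0 1 (by norm_num)
        rw [show (1:ℕ) = 2^0 by norm_num, gl.AA_top hwp 0] at h1
        have h2 := gl.cc_mono hwp (Nat.zero_le n)
        rw [hwy]; omega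
      have hle := (hgl3 hdy).2
      have hle2 : gl.le v w := by rw [hwy]; exact gl.y_max v hvL
      exact hwv (gl.le_antisymm w hwL v hvL hle hle2).symm.symm
    · -- w = AA m' j with j odd
      have hwA : w = gl.AA hwp m' j := hz.symm.trans hzA
      by_cases hmn : m' ≤ n
      · have hdw : gl.vDepth w < m := by
          have h1 : gl.vDepth (gl.AA hwp m' j) < gl.cc hwp m' := gl.AA_depth hwp m' j hjle
          have h2 := gl.cc_mono hwp hmn
          rw [hwA]; omega
        obtain ⟨hluw, hlwv⟩ := hgl3 hdw
        have hlift := gl.AA_lift hwp m' j hjle (n - m')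
        rw [Nat.add_sub_cancel' hmn] at hlift
        have hwn : w = gl.AA hwp n (j * 2^(n-m')) := by rw [hwA, ← hlift]
        have hjn : j * 2^(n-m') ≤ 2^n := by
          calc j * 2^(n-m') ≤ 2^m' * 2^(n-m') := Nat.mul_le_mul_right _ hjle
          _ = 2^n := by rw [← pow_add, Nat.add_sub_cancel' hmn]
        have hlt1 : k < j * 2^(n-m') := by
          apply gl.AA_reflect hwp n k _ (by omega) hjn
          · rw [← hwn]; exact hluw
          · rw [← hwn]; exact Ne.symm hwu
        have hlt2 : j * 2^(n-m') < k+1 := by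
          apply gl.AA_reflect hwp n _ (k+1) hjn hk
          · rw [← hwn]; exact hlwv
          · rw [← hwn]; exact hwv
        omega
      · push_neg at hmn
        have hj' : j = 2*(j/2)+1 := by omega
        have hp2 : (2:ℕ)^m' = 2^(m'-1) * 2 := by
          rw [← pow_succ, show m'-1+1 = m' by omega]
        have hjlt : j/2 < 2^(m'-1) := by omega
        have hdep := gl.AA_odd_depth hwp (m'-1) (j/2) hjlt
        rw [show (m'-1)+1 = m' by omega, ← hj'] at hdep
        have hmono := gl.ccpow_mono hwp (show n ≤ m'-1 by omega)
        rw [← hwA] at hdep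
        have hkn : k < 2^n := by omega
        omega

end GrainLine

/-- The pair `(u,v)` is a (well-ordered) edge of the halved Farey graph. -/
def epair (u v : DyadicSet) : Prop :=
  ∃ n k : ℕ, k + 1 ≤ 2^n ∧ (u:ℚ) = (k:ℚ)/2^n ∧ (v:ℚ) = ((k:ℚ)+1)/2^n

lemma adj_epair {a b : DyadicSet} (h : halvedFarey.Adj a b) (hlt : (a:ℚ) < (b:ℚ)) :
    epair a b := by
  obtain ⟨hne, n, k, hk, hc⟩ := h
  rcases hc with ⟨h1, h2⟩ | ⟨h1, h2⟩
  · exact ⟨n, k, hk, h1, h2⟩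
  · exfalso
    have hpos : (0:ℚ) < 2^n := by positivity
    have hlt2 : (b:ℚ) < (a:ℚ) := by
      rw [h1, h2, div_lt_div_iff_of_pos_right hpos]
      linarith
    exact absurd hlt2 (lt_asymm hlt)

lemma adj_gt {a b : DyadicSet} (h : halvedFarey.Adj a b) (hlt : ¬ (a:ℚ) < (b:ℚ)) :
    (b:ℚ) < (a:ℚ) := by
  obtain ⟨hne, -⟩ := h
  have hq : (a:ℚ) ≠ (b:ℚ) := fun hq => hne (Subtype.ext hq)
  rcases hq.lt_or_gt with h1 | h1
  · exact absurd h1 hlt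
  · exact h1

namespace GrainLine

variable {V : Type*} {G : SimpleGraph V} {x y : V} (gl : GrainLine G x y)
  (hwp : gl.WildlyPresented)

open Classical in
/-- The path index assigned to an edge of the halved Farey graph. -/
noncomputable def eIdx (u v : DyadicSet) : ℕ :=
  if h : epair u v then gl.cc hwp h.choose + h.choose_spec.choose else 0

lemma eIdx_spec (u v : DyadicSet) (h : epair u v) :
    ∃ n k : ℕ, k+1 ≤ 2^n ∧ (u:ℚ) = (k:ℚ)/2^n ∧ (v:ℚ) = ((k:ℚ)+1)/2^n ∧
      gl.eIdx hwp u v = gl.cc hwp n + k := by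
  refine ⟨h.choose, h.choose_spec.choose, h.choose_spec.choose_spec.1,
    h.choose_spec.choose_spec.2.1, h.choose_spec.choose_spec.2.2, ?_⟩
  rw [eIdx, dif_pos h]

lemma eIdx_inj {u v u' v' : DyadicSet} (h : epair u v) (h' : epair u' v')
    (heq : gl.eIdx hwp u v = gl.eIdx hwp u' v') : u = u' ∧ v = v' := by
  obtain ⟨n, k, hk, hu, hv, hi⟩ := gl.eIdx_spec hwp u v h
  obtain ⟨n', k', hk', hu', hv', hi'⟩ := gl.eIdx_spec hwp u' v' h'
  rw [hi, hi'] at heq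
  have hnn : n = n' := by
    by_contra hne2
    rcases Nat.lt_or_ge n n' with hlt | hge
    · have h1 := gl.cc_step hwp n
      have h2 := gl.cc_mono hwp (show n+1 ≤ n' from hlt)
      omega
    · have hlt : n' < n := by omega
      have h1 := gl.cc_step hwp n'
      have h2 := gl.cc_mono hwp (show n'+1 ≤ n from hlt)
      omega
  subst hnn
  have hkk : k = k' := by omega
  subst hkk
  exact ⟨Subtype.ext (hu.symm ▸ hu'.symm ▸ rfl), Subtype.ext (hv.symm ▸ hv'.symm ▸ rfl)⟩

lemma edge_path' (u v : DyadicSet) (h : epair u v) :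
    ∃ q : gl.union.Walk (gl.alph hwp u) (gl.alph hwp v), q.IsPath ∧
      (∀ e ∈ q.edges, e ∈ (gl.P (gl.eIdx hwp u v)).edges) ∧
      (∀ w ∈ q.support, (∃ z : DyadicSet, gl.alph hwp z = w) →
        w = gl.alph hwp u ∨ w = gl.alph hwp v) := by
  obtain ⟨n, k, hk, hu, hv, hi⟩ := gl.eIdx_spec hwp u v h
  have e1 : gl.alph hwp u = gl.AA hwp n k := gl.alph_eq hwp u n k (by omega) hu
  have e2 : gl.alph hwp v = gl.AA hwp n (k+1) := by
    apply gl.alph_eq hwp v n (k+1) hk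
    rw [hv]; push_cast; ring
  rw [hi, e1, e2]
  exact gl.edge_path hwp n k hk

/-- The immersion's paths. -/
noncomputable def immPath : ∀ ⦃a b : DyadicSet⦄, halvedFarey.Adj a b →
    gl.union.Walk (gl.alph hwp a) (gl.alph hwp b) := fun a b h =>
  if hlt : (a:ℚ) < (b:ℚ) then (gl.edge_path' hwp a b (adj_epair h hlt)).choose
  else (gl.edge_path' hwp b a (adj_epair h.symm (adj_gt h hlt))).choose.reverse

lemma immPath_spec (a b : DyadicSet) (h : halvedFarey.Adj a b) :
    ∃ (u v : DyadicSet) (_ : epair u v), s(a,b) = s(u,v) ∧ (gl.immPath hwp h).IsPath ∧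
      (∀ e ∈ (gl.immPath hwp h).edges, e ∈ (gl.P (gl.eIdx hwp u v)).edges) ∧
      (∀ w ∈ (gl.immPath hwp h).support, (∃ z : DyadicSet, gl.alph hwp z = w) →
        w = gl.alph hwp a ∨ w = gl.alph hwp b) := by
  by_cases hlt : (a:ℚ) < (b:ℚ)
  · refine ⟨a, b, adj_epair h hlt, rfl, ?_⟩
    have hspec := (gl.edge_path' hwp a b (adj_epair h hlt)).choose_spec
    have hPeq : gl.immPath hwp h = (gl.edge_path' hwp a b (adj_epair h hlt)).choose := by
      simp only [immPath]
      rw [dif_pos hlt]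
    rw [hPeq]
    exact ⟨hspec.1, hspec.2.1, hspec.2.2⟩
  · have hgt := adj_gt h hlt
    refine ⟨b, a, adj_epair h.symm hgt, Sym2.eq_swap, ?_⟩
    have hspec := (gl.edge_path' hwp b a (adj_epair h.symm hgt)).choose_spec
    have hPeq : gl.immPath hwp h =
        (gl.edge_path' hwp b a (adj_epair h.symm hgt)).choose.reverse := by
      simp only [immPath]
      rw [dif_neg hlt]
    rw [hPeq]
    refine ⟨hspec.1.reverse, ?_, ?_⟩
    · intro e he
      rw [SimpleGraph.Walk.edges_reverse, List.mem_reverse] at he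
      exact hspec.2.1 e he
    · intro w hw hz
      rw [SimpleGraph.Walk.support_reverse, List.mem_reverse] at hw
      exact (hspec.2.2 w hw hz).symm

end GrainLine

/-- the halved Farey graph is strongly immersed in the graph
defined by any wildly presented grain line. -/
theorem halvedFarey_in_wildly_presented {V : Type*} {G : SimpleGraph V}
    {x y : V} (gl : GrainLine G x y) (hwp : gl.WildlyPresented) :
    StronglyImmersed halvedFarey gl.union := by
  classical
  refine ⟨gl.alph hwp, gl.immPath hwp, gl.alph_inj hwp, ?_, ?_, ?_⟩
  · intro a b h
    obtain ⟨u, v, hp, -, hpath, -, -⟩ := gl.immPath_spec hwp a b h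
    exact hpath
  · intro a b a' b' h h' hne e he he'
    obtain ⟨u, v, hp, hs, -, hedges, -⟩ := gl.immPath_spec hwp a b h
    obtain ⟨u', v', hp', hs', -, hedges', -⟩ := gl.immPath_spec hwp a' b' h'
    have hidx : gl.eIdx hwp u v ≠ gl.eIdx hwp u' v' := by
      intro hq
      obtain ⟨rfl, rfl⟩ := gl.eIdx_inj hwp hp hp' hq
      exact hne (hs.trans hs'.symm)
    exact gl.edgeDisj _ _ hidx e (hedges e he) (hedges' e he')
  · intro a b h w hw hz
    obtain ⟨u, v, hp, -, -, -, hint⟩ := gl.immPath_spec hwp a b h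
    exact hint w hw hz
end
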